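/- In any instance of the marriage model of HRT-MSLQ (every hospital has upper quota 1 and lower quota 0 or 1), the ratio of the score of any stable matching N to the score of any stable matching M is at most 2, provided both scores are defined (the instance has at least one hospital with lower quota 1 matched or unmatched appropriately so scores are positive). Formally, if N and M are stable matchings with s(M) > 0, then s(N)/s(M) ≤ 2. -/

import Mathlib

/-- An instance of the Hospitals/Residents problem with ties, incomplete lists,
and lower/upper quotas (HRT-MSLQ).  Preferences are given by rank functions
(smaller rank = more preferred); ties are allowed (equal ranks). -/
structure HRTInstance (R H : Type) [Fintype R] [DecidableEq R] [Fintype H] [DecidableEq H] where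
  acc : R → H → Prop
  rRank : R → H → ℕ
  hRank : H → R → ℕ
  lq : H → ℕ
  uq : H → ℕ

namespace HRTInstance

variable {R H : Type} [Fintype R] [DecidableEq R] [Fintype H] [DecidableEq H]

/-- The set of residents assigned to hospital `h` by assignment `M`. -/
def assignees (M : R → Option H) (h : H) : Finset R :=
  Finset.univ.filter (fun r => M r = some h)

/-- `M` is a matching: it respects acceptability and upper quotas. -/
def IsMatching (I : HRTInstance R H) (M : R → Option H) : Prop :=
  (∀ r h, M r = some h → I.acc r h) ∧ ∀ h, (assignees M h).card ≤ I.uq h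

/-- `(r, h)` is a blocking pair for `M`. -/
def Blocks (I : HRTInstance R H) (M : R → Option H) (r : R) (h : H) : Prop :=
  I.acc r h ∧
  (M r = none ∨ ∃ h', M r = some h' ∧ I.rRank r h < I.rRank r h') ∧
  ((assignees M h).card < I.uq h ∨ ∃ r' ∈ assignees M h, I.hRank h r < I.hRank h r')

/-- `M` is a stable matching. -/
def IsStable (I : HRTInstance R H) (M : R → Option H) : Prop :=
  I.IsMatching M ∧ ∀ r h, ¬ I.Blocks M r h

/-- The total satisfaction ratio (score) of `M`:
`s(M) = Σ_h min{1, |M(h)|/ℓ(h)}`, with score `1` when `ℓ(h) = 0`. -/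
def score (I : HRTInstance R H) (M : R → Option H) : ℚ :=
  ∑ h, if I.lq h = 0 then 1
       else min 1 (((assignees M h).card : ℚ) / (I.lq h : ℚ))

end HRTInstance

/-- In the marriage model (every hospital has upper quota 1 and lower quota 0 or 1),
for any stable matchings `N` and `M` with `s(M) > 0` we have `s(N)/s(M) ≤ 2`. -/
theorem stmt_1 {R H : Type} [Fintype R] [DecidableEq R] [Fintype H] [DecidableEq H]
    (I : HRTInstance R H)
    (hu : ∀ h, I.uq h = 1) (hl : ∀ h, I.lq h ≤ 1)
    (N M : R → Option H) (hN : I.IsStable N) (hM : I.IsStable M)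
    (hpos : 0 < I.score M) :
    I.score N / I.score M ≤ 2 := by
  classical
  have hcard1 : ∀ (P : R → Option H), I.IsMatching P → ∀ h,
      (HRTInstance.assignees P h).card ≤ 1 := by
    intro P hP h; simpa [hu h] using hP.2 h
  have hscore : ∀ (P : R → Option H), I.IsMatching P →
      I.score P = (((Finset.univ.filter
        (fun h => I.lq h = 0 ∨ (HRTInstance.assignees P h).Nonempty)) : Finset H).card : ℚ) := by
    intro P hP
    rw [HRTInstance.score, Finset.card_filter]
    push_cast
    apply Finset.sum_congr rfl
    intro h _
    by_cases h0 : I.lq h = 0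
    · simp [h0]
    · have hl1 : I.lq h = 1 := le_antisymm (hl h) (Nat.one_le_iff_ne_zero.mpr h0)
      by_cases hne : (HRTInstance.assignees P h).Nonempty
      · have h1 : 1 ≤ (HRTInstance.assignees P h).card := Finset.card_pos.mpr hne
        have hc : (HRTInstance.assignees P h).card = 1 := le_antisymm (hcard1 P hP h) h1
        simp [h0, hl1, hc, hne]
      · have hc : (HRTInstance.assignees P h).card = 0 := by
          simp [Finset.card_eq_zero, Finset.not_nonempty_iff_eq_empty.mp hne]
        simp [h0, hl1, hc, hne]
  set SN : Finset H := Finset.univ.filter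
    (fun h => I.lq h = 0 ∨ (HRTInstance.assignees N h).Nonempty) with hSNdef
  set SM : Finset H := Finset.univ.filter
    (fun h => I.lq h = 0 ∨ (HRTInstance.assignees M h).Nonempty) with hSMdef
  -- stability: a hospital matched in N but empty in M must have its N-partner matched in M
  have key : ∀ h r, N r = some h → ¬(HRTInstance.assignees M h).Nonempty →
      ∃ h', M r = some h' := by
    intro h r hNr hMne
    cases hMr : M r with
    | some h' => exact ⟨h', rfl⟩
    | none =>
      exfalso
      apply hM.2 r h
      refine ⟨hN.1.1 r h hNr, Or.inl hMr, Or.inl ?_⟩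
      have he : (HRTInstance.assignees M h) = ∅ := Finset.not_nonempty_iff_eq_empty.mp hMne
      rw [he, hu h]; simp
  set B' : Finset H := Finset.univ.filter
    (fun h => (HRTInstance.assignees N h).Nonempty ∧ ¬(HRTInstance.assignees M h).Nonempty)
    with hB'def
  set CB : Finset H := Finset.univ.filter
    (fun h => I.lq h = 0 ∨ ((HRTInstance.assignees N h).Nonempty ∧
      (HRTInstance.assignees M h).Nonempty)) with hCBdef
  have hCBsub : CB ⊆ SM := by
    intro h hh
    simp only [hCBdef, hSMdef, Finset.mem_filter, Finset.mem_univ, true_and] at hh ⊢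
    tauto
  -- injection from B' into SM
  set f : H → H := fun h =>
    if hne : (HRTInstance.assignees N h).Nonempty then (M hne.choose).getD h else h with hfdef
  have hB'card : B'.card ≤ SM.card := by
    apply Finset.card_le_card_of_injOn f
    · intro h hh
      simp only [hB'def, Finset.mem_coe, Finset.mem_filter, Finset.mem_univ, true_and] at hh
      obtain ⟨hne, hMe⟩ := hh
      have hr : hne.choose ∈ HRTInstance.assignees N h := hne.choose_spec
      have hNr : N hne.choose = some h := by
        simpa [HRTInstance.assignees] using hr
      obtain ⟨h', hMr⟩ := key h hne.choose hNr hMe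
      have hfh : f h = h' := by simp [hfdef, hne, hMr]
      rw [hfh]
      simp only [hSMdef, Finset.mem_coe, Finset.mem_filter, Finset.mem_univ, true_and]
      exact Or.inr ⟨hne.choose, by simpa [HRTInstance.assignees] using hMr⟩
    · intro h₁ hh₁ h₂ hh₂ hf
      simp only [hB'def, Finset.mem_coe, Finset.mem_filter, Finset.mem_univ, true_and] at hh₁ hh₂
      obtain ⟨hne₁, hMe₁⟩ := hh₁
      obtain ⟨hne₂, hMe₂⟩ := hh₂
      have hr₁ : hne₁.choose ∈ HRTInstance.assignees N h₁ := hne₁.choose_spec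
      have hr₂ : hne₂.choose ∈ HRTInstance.assignees N h₂ := hne₂.choose_spec
      have hNr₁ : N hne₁.choose = some h₁ := by simpa [HRTInstance.assignees] using hr₁
      have hNr₂ : N hne₂.choose = some h₂ := by simpa [HRTInstance.assignees] using hr₂
      obtain ⟨h₁', hMr₁⟩ := key h₁ hne₁.choose hNr₁ hMe₁
      obtain ⟨h₂', hMr₂⟩ := key h₂ hne₂.choose hNr₂ hMe₂
      have hf₁ : f h₁ = h₁' := by simp [hfdef, hne₁, hMr₁]
      have hf₂ : f h₂ = h₂' := by simp [hfdef, hne₂, hMr₂]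
      have heq : h₁' = h₂' := by rw [← hf₁, ← hf₂, hf]
      subst heq
      have hm₁ : hne₁.choose ∈ HRTInstance.assignees M h₁' := by
        simpa [HRTInstance.assignees] using hMr₁
      have hm₂ : hne₂.choose ∈ HRTInstance.assignees M h₁' := by
        simpa [HRTInstance.assignees] using hMr₂
      have hrr : hne₁.choose = hne₂.choose :=
        Finset.card_le_one.mp (hcard1 M hM.1 h₁') _ hm₁ _ hm₂
      have : some h₁ = some h₂ := by rw [← hNr₁, hrr, hNr₂]
      exact Option.some_injective _ this
  have hSNsub : SN ⊆ CB ∪ B' := by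
    intro h hh
    simp only [hSNdef, hCBdef, hB'def, Finset.mem_union, Finset.mem_filter,
      Finset.mem_univ, true_and] at hh ⊢
    by_cases hMne : (HRTInstance.assignees M h).Nonempty <;> tauto
  have hmain : SN.card ≤ 2 * SM.card := by
    calc SN.card ≤ (CB ∪ B').card := Finset.card_le_card hSNsub
      _ ≤ CB.card + B'.card := Finset.card_union_le _ _
      _ ≤ SM.card + SM.card := Nat.add_le_add (Finset.card_le_card hCBsub) hB'card
      _ = 2 * SM.card := by ring
  rw [hscore N hN.1, hscore M hM.1] at *
  rw [div_le_iff₀ (by exact_mod_cast hpos)]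
  calc (SN.card : ℚ) ≤ 2 * SM.card := by exact_mod_cast hmain
    _ = 2 * SM.card := rfl
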